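/- Let ξ(x) = Σ_{p≥2} c_p² x^p with nonnegative coefficients, ξ(1)=1, ξ ≠ x², and fix q ∈ (0,1). Define f₂(q,z) = (1−q)(ξ'(1)−ξ'(q))·((1+z)/z²·log(1+z) − 1/z) + ξ'(q)(1−q) − 1 + ξ(q) for z > 0. Then there exists a unique z > 0 with f₂(q,z) = 0. -/

import Mathlib

open Real Set Filter

lemma log_aux (z : ℝ) (hz : 0 < z) : z / (1 + z) < Real.log (1 + z) := by
  have h := Real.log_lt_sub_one_of_pos (x := (1+z)⁻¹) (by positivity) (by
    intro h; rw [inv_eq_one] at h; linarith)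
  rw [Real.log_inv] at h
  have h1 : (0:ℝ) < 1 + z := by linarith
  have : (1+z)⁻¹ - 1 = -(z/(1+z)) := by field_simp; ring
  rw [this] at h
  linarith

lemma log_ineq (z : ℝ) (hz : 0 < z) : 2 * z < (z + 2) * Real.log (1 + z) := by
  -- h z = (z+2) log(1+z) − 2z strictly increasing on Ici 0, value 0 at 0
  have key : StrictMonoOn (fun z : ℝ => (z + 2) * Real.log (1 + z) - 2 * z) (Set.Ici 0) := by
    apply strictMonoOn_of_deriv_pos (convex_Ici 0)
    · apply ContinuousOn.sub
      · apply ContinuousOn.mul (by fun_prop)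
        apply ContinuousOn.log (by fun_prop)
        intro x hx; simp only [mem_Ici] at hx; intro h; linarith
      · fun_prop
    · intro x hx
      rw [interior_Ici] at hx
      simp only [mem_Ioi] at hx
      have h1 : (0:ℝ) < 1 + x := by linarith
      have hd : HasDerivAt (fun z : ℝ => (z + 2) * Real.log (1 + z) - 2 * z)
          (1 * Real.log (1 + x) + (x + 2) * (1 / (1 + x)) - 2) x := by
        have hlog : HasDerivAt (fun z : ℝ => Real.log (1 + z)) (1 / (1 + x)) x := by
          have := ((hasDerivAt_id x).const_add 1).log h1.ne'
          simpa using this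
        have h2 : HasDerivAt (fun z : ℝ => 2 * z) 2 x := by
          simpa using (hasDerivAt_id x).const_mul 2
        exact (((hasDerivAt_id x).add_const 2).mul hlog).sub h2
      rw [hd.deriv]
      have hlg := log_aux x hx
      have : (x + 2) * (1 / (1 + x)) = 1 + 1/(1+x) := by field_simp; ring
      rw [this]
      have : x / (1+x) + 1/(1+x) = 1 := by field_simp; ring
      nlinarith
  have := key (le_refl (0:ℝ)) (le_of_lt hz) hz
  simpa using this

lemma hasDerivAt_G (z : ℝ) (hz : 0 < z) :
    HasDerivAt (fun z : ℝ => (1 + z) / z ^ 2 * Real.log (1 + z) - 1 / z)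
      ((2 * z - (z + 2) * Real.log (1 + z)) / z ^ 3) z := by
  have h1 : (0:ℝ) < 1 + z := by linarith
  have hz2 : z ^ 2 ≠ 0 := by positivity
  have hlog : HasDerivAt (fun z : ℝ => Real.log (1 + z)) (1 / (1 + z)) z := by
    simpa using ((hasDerivAt_id z).const_add 1).log h1.ne'
  have hdiv : HasDerivAt (fun z : ℝ => (1 + z) / z ^ 2)
      ((1 * z ^ 2 - (1 + z) * (2 * z ^ 1)) / (z ^ 2) ^ 2) z :=
    ((hasDerivAt_id z).const_add 1).div (hasDerivAt_pow 2 z) hz2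
  have hinv : HasDerivAt (fun z : ℝ => 1 / z) (-(1 / z ^ 2)) z := by
    simpa [one_div] using hasDerivAt_inv hz.ne'
  have := (hdiv.mul hlog).sub hinv
  convert this using 1
  · rfl
  · rfl
  · rfl
  field_simp [hz.ne']
  ring

lemma G_strictAnti : StrictAntiOn
    (fun z : ℝ => (1 + z) / z ^ 2 * Real.log (1 + z) - 1 / z) (Set.Ioi 0) := by
  apply strictAntiOn_of_deriv_neg (convex_Ioi 0)
  · intro x hx
    exact (hasDerivAt_G x hx).continuousAt.continuousWithinAt
  · intro x hx
    rw [interior_Ioi] at hx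
    rw [(hasDerivAt_G x hx).deriv]
    apply div_neg_of_neg_of_pos
    · linarith [log_ineq x hx]
    · exact pow_pos hx 3

lemma G_lower (z : ℝ) (hz : 0 < z) :
    1 / (2 + z) < (1 + z) / z ^ 2 * Real.log (1 + z) - 1 / z := by
  have h2 : (0:ℝ) < z ^ 2 * (2 + z) := by positivity
  have hnum : 0 < (1 + z) * (z + 2) * Real.log (1 + z) - z * (2 + z) - z ^ 2 := by
    nlinarith [log_ineq z hz, Real.log_nonneg (by linarith : (1:ℝ) ≤ 1 + z)]
  have heq : (1 + z) / z ^ 2 * Real.log (1 + z) - 1 / z - 1 / (2 + z)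
      = ((1 + z) * (z + 2) * Real.log (1 + z) - z * (2 + z) - z ^ 2) / (z ^ 2 * (2 + z)) := by
    field_simp
    ring
  have := div_pos hnum h2
  linarith [heq ▸ this]

lemma G_upper (z : ℝ) (hz : 1 ≤ z) :
    (1 + z) / z ^ 2 * Real.log (1 + z) - 1 / z ≤ 8 / Real.sqrt z := by
  have hz0 : (0:ℝ) < z := by linarith
  have hs : 0 < Real.sqrt z := Real.sqrt_pos.mpr hz0
  have hss : Real.sqrt z * Real.sqrt z = z := Real.mul_self_sqrt hz0.le
  have h1 : Real.log (1 + z) ≤ 2 * Real.sqrt (1 + z) := by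
    have h := Real.log_le_sub_one_of_pos (x := Real.sqrt (1 + z)) (by positivity)
    rw [Real.log_sqrt (by linarith)] at h
    nlinarith [Real.sqrt_nonneg (1 + z)]
  have h2 : Real.sqrt (1 + z) ≤ 2 * Real.sqrt z := by
    have : (2:ℝ) * Real.sqrt z = Real.sqrt (4 * z) := by
      rw [show (4:ℝ) * z = 2 ^ 2 * z by ring, Real.sqrt_mul (by norm_num),
        Real.sqrt_sq (by norm_num)]
    rw [this]
    exact Real.sqrt_le_sqrt (by linarith)
  have hL : Real.log (1 + z) ≤ 4 * Real.sqrt z := by linarith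
  have hL0 : 0 ≤ Real.log (1 + z) := Real.log_nonneg (by linarith)
  calc (1 + z) / z ^ 2 * Real.log (1 + z) - 1 / z
      ≤ (1 + z) / z ^ 2 * Real.log (1 + z) := by
        have : (0:ℝ) < 1 / z := by positivity
        linarith
    _ ≤ (2 * z) / z ^ 2 * (4 * Real.sqrt z) := by
        gcongr <;> linarith
    _ = 8 / Real.sqrt z := by
        rw [eq_div_iff hs.ne']
        field_simp
        nlinarith [hss]

lemma G_unique_level (t : ℝ) (ht0 : 0 < t) (ht : t < 1 / 2) :
    ∃! z : ℝ, 0 < z ∧ (1 + z) / z ^ 2 * Real.log (1 + z) - 1 / z = t := by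
  set G : ℝ → ℝ := fun z => (1 + z) / z ^ 2 * Real.log (1 + z) - 1 / z with hG
  set z₀ : ℝ := 1 / t - 2 with hz₀def
  set z₁ : ℝ := 81 / t ^ 2 with hz₁def
  have h2t : 2 < 1 / t := by
    rw [lt_div_iff₀ ht0]; linarith
  have hz₀ : 0 < z₀ := by simp only [hz₀def]; linarith
  have hz₁1 : 1 ≤ z₁ := by
    rw [hz₁def, le_div_iff₀ (by positivity)]
    nlinarith
  have hz₀₁ : z₀ ≤ z₁ := by
    rw [hz₀def, hz₁def, le_div_iff₀ (by positivity : (0:ℝ) < t ^ 2)]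
    have h1 : (1 / t - 2) * t ^ 2 = t - 2 * t ^ 2 := by field_simp
    rw [h1]
    nlinarith
  -- G z₀ > t
  have hGz₀ : t < G z₀ := by
    have := G_lower z₀ hz₀
    have h2z : 2 + z₀ = 1 / t := by rw [hz₀def]; ring
    rw [h2z, one_div_one_div] at this
    exact this
  -- G z₁ < t
  have hGz₁ : G z₁ < t := by
    have h := G_upper z₁ hz₁1
    have hs : Real.sqrt z₁ = 9 / t := by
      rw [hz₁def, show (81:ℝ) / t ^ 2 = (9 / t) ^ 2 by ring, Real.sqrt_sq (by positivity)]
    rw [hs] at h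
    have : 8 / (9 / t) = 8 * t / 9 := by field_simp
    rw [this] at h
    show (1 + z₁) / z₁ ^ 2 * Real.log (1 + z₁) - 1 / z₁ < t
    linarith
  have hcont : ContinuousOn G (Set.Icc z₀ z₁) := by
    intro x hx
    exact (hasDerivAt_G x (lt_of_lt_of_le hz₀ hx.1)).continuousAt.continuousWithinAt
  have := intermediate_value_Icc' hz₀₁ hcont
  obtain ⟨z, hzmem, hzval⟩ := this ⟨hGz₁.le, hGz₀.le⟩
  have hzpos : 0 < z := lt_of_lt_of_le hz₀ hzmem.1
  refine ⟨z, ⟨hzpos, hzval⟩, ?_⟩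
  rintro y ⟨hy, hyval⟩
  exact G_strictAnti.injOn hy hzpos (hyval.trans hzval.symm)

lemma geom_aux (q : ℝ) (p : ℕ) : (1 - q) * (∑ k ∈ Finset.range p, q ^ k) = 1 - q ^ p := by
  have := geom_sum_mul q p
  nlinarith [this]

lemma ineq1 (q : ℝ) (hq0 : 0 ≤ q) (hq1 : q ≤ 1) (p : ℕ) :
    q ^ p + (1 - q) * ((p : ℝ) * q ^ (p - 1)) ≤ 1 := by
  have hsum : (p : ℝ) * q ^ (p - 1) ≤ ∑ k ∈ Finset.range p, q ^ k := by
    calc (p : ℝ) * q ^ (p - 1) = ∑ _k ∈ Finset.range p, q ^ (p - 1) := by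
          simp [Finset.sum_const, mul_comm]
      _ ≤ ∑ k ∈ Finset.range p, q ^ k := by
          apply Finset.sum_le_sum
          intro k hk
          simp only [Finset.mem_range] at hk
          exact pow_le_pow_of_le_one hq0 hq1 (by omega : k ≤ p - 1)
  have := mul_le_mul_of_nonneg_left hsum (by linarith : (0:ℝ) ≤ 1 - q)
  rw [geom_aux] at this
  linarith

lemma ineq1strict (q : ℝ) (hq0 : 0 < q) (hq1 : q < 1) (p : ℕ) (hp : 3 ≤ p) :
    q ^ p + (1 - q) * ((p : ℝ) * q ^ (p - 1)) < 1 := by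
  have hsum : (p : ℝ) * q ^ (p - 1) < ∑ k ∈ Finset.range p, q ^ k := by
    calc (p : ℝ) * q ^ (p - 1) = ∑ _k ∈ Finset.range p, q ^ (p - 1) := by
          simp [Finset.sum_const, mul_comm]
      _ < ∑ k ∈ Finset.range p, q ^ k := by
          apply Finset.sum_lt_sum
          · intro k hk
            exact pow_le_pow_of_le_one hq0.le hq1.le (by
              simp only [Finset.mem_range] at hk; omega)
          · refine ⟨0, Finset.mem_range.mpr (by omega), ?_⟩
            simpa using pow_lt_one₀ hq0.le hq1 (by omega : p - 1 ≠ 0)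
  have := mul_lt_mul_of_pos_left hsum (by linarith : (0:ℝ) < 1 - q)
  rw [geom_aux] at this
  linarith

lemma ineq2 (q : ℝ) (hq0 : 0 ≤ q) (hq1 : q ≤ 1) (p : ℕ) :
    1 ≤ (1 - q) * ((p : ℝ) * (1 + q ^ (p - 1))) / 2 + q ^ p := by
  have hsum : 2 * (∑ k ∈ Finset.range p, q ^ k) ≤ (p : ℝ) * (1 + q ^ (p - 1)) := by
    have hrefl : ∑ k ∈ Finset.range p, q ^ (p - 1 - k) = ∑ k ∈ Finset.range p, q ^ k :=
      Finset.sum_range_reflect (fun k => q ^ k) p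
    calc 2 * (∑ k ∈ Finset.range p, q ^ k)
        = ∑ k ∈ Finset.range p, (q ^ k + q ^ (p - 1 - k)) := by
          rw [Finset.sum_add_distrib, hrefl]; ring
      _ ≤ ∑ _k ∈ Finset.range p, (1 + q ^ (p - 1)) := by
          apply Finset.sum_le_sum
          intro k hk
          simp only [Finset.mem_range] at hk
          have hmul : q ^ k * q ^ (p - 1 - k) = q ^ (p - 1) := by
            rw [← pow_add]; congr 1; omega
          nlinarith [pow_le_one₀ hq0 hq1 (n := k), pow_le_one₀ hq0 hq1 (n := p - 1 - k),
            pow_nonneg hq0 k, pow_nonneg hq0 (p - 1 - k)]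
      _ = (p : ℝ) * (1 + q ^ (p - 1)) := by simp [Finset.sum_const, mul_comm]; ring
  have h1q : (0:ℝ) ≤ 1 - q := by linarith
  have := mul_le_mul_of_nonneg_left hsum h1q
  rw [show (1 - q) * (2 * ∑ k ∈ Finset.range p, q ^ k)
      = 2 * ((1 - q) * ∑ k ∈ Finset.range p, q ^ k) by ring, geom_aux] at this
  linarith

lemma ineq2strict (q : ℝ) (hq0 : 0 < q) (hq1 : q < 1) (p : ℕ) (hp : 3 ≤ p) :
    1 < (1 - q) * ((p : ℝ) * (1 + q ^ (p - 1))) / 2 + q ^ p := by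
  have hsum : 2 * (∑ k ∈ Finset.range p, q ^ k) < (p : ℝ) * (1 + q ^ (p - 1)) := by
    have hrefl : ∑ k ∈ Finset.range p, q ^ (p - 1 - k) = ∑ k ∈ Finset.range p, q ^ k :=
      Finset.sum_range_reflect (fun k => q ^ k) p
    calc 2 * (∑ k ∈ Finset.range p, q ^ k)
        = ∑ k ∈ Finset.range p, (q ^ k + q ^ (p - 1 - k)) := by
          rw [Finset.sum_add_distrib, hrefl]; ring
      _ < ∑ _k ∈ Finset.range p, (1 + q ^ (p - 1)) := by
          apply Finset.sum_lt_sum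
          · intro k hk
            simp only [Finset.mem_range] at hk
            have hmul : q ^ k * q ^ (p - 1 - k) = q ^ (p - 1) := by
              rw [← pow_add]; congr 1; omega
            nlinarith [pow_le_one₀ hq0.le hq1.le (n := k),
              pow_le_one₀ hq0.le hq1.le (n := p - 1 - k),
              pow_nonneg hq0.le k, pow_nonneg hq0.le (p - 1 - k)]
          · refine ⟨1, Finset.mem_range.mpr (by omega), ?_⟩
            have hmul : q ^ 1 * q ^ (p - 1 - 1) = q ^ (p - 1) := by
              rw [← pow_add]; congr 1; omega
            have h1 : q ^ 1 < 1 := by simpa using hq1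
            have h2 : q ^ (p - 1 - 1) < 1 := pow_lt_one₀ hq0.le hq1 (by omega)
            nlinarith
      _ = (p : ℝ) * (1 + q ^ (p - 1)) := by simp [Finset.sum_const, mul_comm]; ring
  have h1q : (0:ℝ) < 1 - q := by linarith
  have := mul_lt_mul_of_pos_left hsum h1q
  rw [show (1 - q) * (2 * ∑ k ∈ Finset.range p, q ^ k)
      = 2 * ((1 - q) * ∑ k ∈ Finset.range p, q ^ k) by ring, geom_aux] at this
  linarith

/-- For `ξ(x) = ∑_{p≥2} c_p x^p` with nonnegative coefficients, `ξ(1)=1`, `ξ ≠ x²`, and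
`q ∈ (0,1)`, there exists a unique `z > 0` with
`f₂(q,z) = (1−q)(ξ'(1)−ξ'(q))((1+z)/z² log(1+z) − 1/z) + ξ'(q)(1−q) − 1 + ξ(q) = 0`. -/
theorem f2_unique_zero
    (c : ℕ → ℝ) (hc : ∀ p, 0 ≤ c p) (hc0 : c 0 = 0) (hc1 : c 1 = 0)
    (hsum : Summable (fun p : ℕ => (2 : ℝ) ^ p * c p))
    (hnorm : (∑' p : ℕ, c p) = 1)
    (hne : ∃ p : ℕ, 3 ≤ p ∧ 0 < c p)
    (xi xi' : ℝ → ℝ)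
    (hxi : ∀ x : ℝ, xi x = ∑' p : ℕ, c p * x ^ p)
    (hxi' : ∀ x : ℝ, xi' x = ∑' p : ℕ, (p : ℝ) * c p * x ^ (p - 1))
    (q : ℝ) (hq : 0 < q) (hq1 : q < 1) :
    ∃! z : ℝ, 0 < z ∧
      (1 - q) * (xi' 1 - xi' q) * ((1 + z) / z ^ 2 * Real.log (1 + z) - 1 / z)
        + xi' q * (1 - q) - 1 + xi q = 0 := by
  obtain ⟨p₀, hp₀3, hp₀c⟩ := hne
  have hq0 : (0:ℝ) ≤ q := hq.le
  have hq1' : q ≤ 1 := hq1.le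
  have hp2 : ∀ p : ℕ, (p : ℝ) ≤ 2 ^ p := by
    intro p
    exact_mod_cast (Nat.lt_two_pow_self (n := p)).le
  have hqp1 : ∀ p : ℕ, q ^ (p - 1) ≤ 1 := fun p => pow_le_one₀ hq0 hq1'
  have hqp : ∀ p : ℕ, q ^ p ≤ 1 := fun p => pow_le_one₀ hq0 hq1'
  have h2p1 : ∀ p : ℕ, (1:ℝ) ≤ 2 ^ p := fun p => one_le_pow₀ (by norm_num)
  -- summability
  have sc : Summable c := by
    apply Summable.of_nonneg_of_le hc _ hsum
    intro p
    nlinarith [hc p, h2p1 p]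
  have sq : Summable (fun p : ℕ => c p * q ^ p) := by
    apply Summable.of_nonneg_of_le (fun p => mul_nonneg (hc p) (pow_nonneg hq0 p)) _ hsum
    intro p
    nlinarith [hc p, hqp p, pow_nonneg hq0 p, h2p1 p]
  have s1' : Summable (fun p : ℕ => (p : ℝ) * c p) := by
    apply Summable.of_nonneg_of_le
      (fun p => mul_nonneg (Nat.cast_nonneg p) (hc p)) _ hsum
    intro p
    nlinarith [hc p, hp2 p, Nat.cast_nonneg (α := ℝ) p]
  have sq' : Summable (fun p : ℕ => (p : ℝ) * c p * q ^ (p - 1)) := by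
    apply Summable.of_nonneg_of_le (fun p => mul_nonneg
      (mul_nonneg (Nat.cast_nonneg p) (hc p)) (pow_nonneg hq0 (p-1))) _ hsum
    intro p
    have h0 : (0:ℝ) ≤ (p:ℝ) * c p := mul_nonneg (Nat.cast_nonneg p) (hc p)
    nlinarith [hc p, hp2 p, hqp1 p, pow_nonneg hq0 (p-1), Nat.cast_nonneg (α := ℝ) p]
  -- values
  have hxq : xi q = ∑' p : ℕ, c p * q ^ p := hxi q
  have hxiq' : xi' q = ∑' p : ℕ, (p : ℝ) * c p * q ^ (p - 1) := hxi' q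
  have hxi1' : xi' 1 = ∑' p : ℕ, (p : ℝ) * c p := by rw [hxi' 1]; simp
  have hp₀pos : (0:ℝ) < (p₀ : ℝ) := by
    have : 0 < p₀ := by omega
    exact_mod_cast this
  -- positivity of A
  have hA : 0 < xi' 1 - xi' q := by
    rw [hxi1', hxiq', ← Summable.tsum_sub s1' sq']
    apply Summable.tsum_pos (s1'.sub sq') _ p₀
    · have h1 : q ^ (p₀ - 1) < 1 := pow_lt_one₀ hq0 hq1 (by omega)
      show 0 < (p₀ : ℝ) * c p₀ - (p₀ : ℝ) * c p₀ * q ^ (p₀ - 1)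
      nlinarith [mul_pos (mul_pos hp₀pos hp₀c) (sub_pos.mpr h1)]
    · intro p
      have h0 : (0:ℝ) ≤ (p:ℝ) * c p := mul_nonneg (Nat.cast_nonneg p) (hc p)
      show 0 ≤ (p : ℝ) * c p - (p : ℝ) * c p * q ^ (p - 1)
      nlinarith [hqp1 p]
  have hApos : 0 < (1 - q) * (xi' 1 - xi' q) := mul_pos (by linarith) hA
  -- m := 1 - xi q - xi' q * (1 - q)  is positive
  have hm : 0 < 1 - xi q - xi' q * (1 - q) := by
    have key : (∑' p : ℕ, (c p * q ^ p + (1 - q) * ((p : ℝ) * c p * q ^ (p - 1))))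
        < ∑' p : ℕ, c p := by
      apply Summable.tsum_lt_tsum (i := p₀) _ _ (sq.add (sq'.mul_left (1 - q))) sc
      · intro p
        have h1 := mul_le_mul_of_nonneg_left (ineq1 q hq0 hq1' p) (hc p)
        show c p * q ^ p + (1 - q) * ((p : ℝ) * c p * q ^ (p - 1)) ≤ c p
        nlinarith
      · have h1 := mul_lt_mul_of_pos_left (ineq1strict q hq hq1 p₀ hp₀3) hp₀c
        show c p₀ * q ^ p₀ + (1 - q) * ((p₀ : ℝ) * c p₀ * q ^ (p₀ - 1)) < c p₀
        nlinarith
    rw [Summable.tsum_add sq (sq'.mul_left (1 - q)), tsum_mul_left, hnorm] at key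
    rw [hxq, hxiq']
    linarith
  -- A/2 exceeds m
  have hAB : 1 - xi q - xi' q * (1 - q) < (1 - q) * (xi' 1 - xi' q) / 2 := by
    have key : (∑' p : ℕ, c p)
        < ∑' p : ℕ, ((1 - q) / 2 * ((p : ℝ) * c p + (p : ℝ) * c p * q ^ (p - 1))
            + c p * q ^ p) := by
      apply Summable.tsum_lt_tsum (i := p₀) _ _ sc (((s1'.add sq').mul_left ((1 - q) / 2)).add sq)
      · intro p
        have h1 := mul_le_mul_of_nonneg_left (ineq2 q hq0 hq1' p) (hc p)
        show c p ≤ (1 - q) / 2 * ((p : ℝ) * c p + (p : ℝ) * c p * q ^ (p - 1)) + c p * q ^ p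
        nlinarith
      · have h1 := mul_lt_mul_of_pos_left (ineq2strict q hq hq1 p₀ hp₀3) hp₀c
        show c p₀ < (1 - q) / 2 * ((p₀ : ℝ) * c p₀ + (p₀ : ℝ) * c p₀ * q ^ (p₀ - 1))
          + c p₀ * q ^ p₀
        nlinarith
    rw [Summable.tsum_add ((s1'.add sq').mul_left ((1 - q) / 2)) sq, tsum_mul_left,
      Summable.tsum_add s1' sq', hnorm] at key
    rw [hxq, hxiq', hxi1']
    linarith
  -- reduce to level set of G
  have ht0 : 0 < (1 - xi q - xi' q * (1 - q)) / ((1 - q) * (xi' 1 - xi' q)) :=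
    div_pos hm hApos
  have ht : (1 - xi q - xi' q * (1 - q)) / ((1 - q) * (xi' 1 - xi' q)) < 1 / 2 := by
    rw [div_lt_iff₀ hApos]
    linarith
  obtain ⟨z, ⟨hz, hGz⟩, huniq⟩ := G_unique_level _ ht0 ht
  refine ⟨z, ⟨hz, ?_⟩, ?_⟩
  · rw [hGz]
    have h : (1 - q) * (xi' 1 - xi' q)
        * ((1 - xi q - xi' q * (1 - q)) / ((1 - q) * (xi' 1 - xi' q)))
        = 1 - xi q - xi' q * (1 - q) := by
      field_simp [show (1:ℝ) - q ≠ 0 by linarith]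
    rw [h]
    ring
  · rintro y ⟨hy, hyeq⟩
    refine huniq y ⟨hy, ?_⟩
    have h1 : (1 - q) * (xi' 1 - xi' q) * ((1 + y) / y ^ 2 * Real.log (1 + y) - 1 / y)
        = 1 - xi q - xi' q * (1 - q) := by linarith
    rw [eq_div_iff hApos.ne', mul_comm]
    exact h1
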